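/- (i) If a parking function a is written as a shifted concatenation a = u•v of two nonempty words, then u and v are themselves parking functions. (ii) Every nonempty parking function a admits a unique factorization a = a_1 • a_2 • ⋯ • a_k as a shifted concatenation of nonempty connected parking functions. -/
import Mathlib


/-- A word over the positive integers is a parking function if, for every
`i` with `1 ≤ i ≤ n` (where `n` is its length), at least `i` of its letters
are `≤ i`; this is equivalent to the condition that its nondecreasing
rearrangement `a'` satisfies `a'ᵢ ≤ i` for all `i`. -/
def IsParkingFunction (w : List ℕ) : Prop :=
  (∀ x ∈ w, 1 ≤ x) ∧
  ∀ i : ℕ, 1 ≤ i → i ≤ w.length → i ≤ (w.filter (fun x => x ≤ i)).length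

/-- A word (over the positive integers) is connected if it cannot be written as the
shifted concatenation `u ++ v.map (· + u.length)` of two nonempty words over the
positive integers. -/
def Connected (w : List ℕ) : Prop :=
  ¬ ∃ u v : List ℕ, u ≠ [] ∧ v ≠ [] ∧ (∀ x ∈ u, 1 ≤ x) ∧ (∀ x ∈ v, 1 ≤ x) ∧
      w = u ++ v.map (· + u.length)

/-- Shifted concatenation of a list of words. -/
def sconcat : List (List ℕ) → List ℕ
  | [] => []
  | u :: L => u ++ (sconcat L).map (· + u.length)

/-- (i) If a parking function is written as a shifted concatenation
`u ++ v.map (· + u.length)` of two nonempty words over the positive integers,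
then `u` and `v` are themselves parking functions.
(ii) Every nonempty parking function admits a unique factorization as a shifted
concatenation of nonempty connected parking functions. -/
lemma filter_map_shift (v : List ℕ) (n i : ℕ) :
    ((v.map (· + n)).filter (fun x => x ≤ n + i)).length
      = (v.filter (fun x => x ≤ i)).length := by
  induction v with
  | nil => simp
  | cons a t ih =>
    simp only [List.map_cons, List.filter_cons]
    have h' : (decide (a + n ≤ n + i)) = decide (a ≤ i) := by
      simp only [decide_eq_decide]; omega
    rw [h']
    by_cases hc : a ≤ i <;> simp [hc, ih]

lemma filter_map_low (v : List ℕ) (hv : ∀ x ∈ v, 1 ≤ x) (n i : ℕ) (hi : i ≤ n) :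
    (v.map (· + n)).filter (fun x => x ≤ i) = [] := by
  rw [List.filter_eq_nil_iff]
  intro a ha
  obtain ⟨x, hx, rfl⟩ := List.mem_map.mp ha
  have := hv x hx
  simp only [decide_eq_true_eq]
  omega

lemma part_i (u v : List ℕ) (hu : u ≠ []) (hv : v ≠ []) (hup : ∀ x ∈ u, 1 ≤ x)
    (hvp : ∀ x ∈ v, 1 ≤ x)
    (h : IsParkingFunction (u ++ v.map (· + u.length))) :
    IsParkingFunction u ∧ IsParkingFunction v := by
  obtain ⟨hpos, hcount⟩ := h
  constructor
  · refine ⟨hup, fun i h1 h2 => ?_⟩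
    have hh := hcount i h1 (by simp only [List.length_append, List.length_map]; omega)
    rw [List.filter_append, filter_map_low v hvp u.length i h2] at hh
    simpa using hh
  · refine ⟨hvp, fun i h1 h2 => ?_⟩
    have hh := hcount (u.length + i) (by omega)
      (by simp only [List.length_append, List.length_map]; omega)
    rw [List.filter_append, List.length_append, filter_map_shift] at hh
    have hlen : (u.filter (fun x => x ≤ u.length + i)).length ≤ u.length :=
      List.length_filter_le _ _
    omega

lemma sconcat_pos {L : List (List ℕ)} (h : ∀ w ∈ L, ∀ x ∈ w, 1 ≤ x) :
    ∀ x ∈ sconcat L, 1 ≤ x := by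
  induction L with
  | nil => simp [sconcat]
  | cons u t ih =>
    intro x hx
    rw [sconcat, List.mem_append] at hx
    rcases hx with hx | hx
    · exact h u (by simp) x hx
    · obtain ⟨y, hy, rfl⟩ := List.mem_map.mp hx
      have := ih (fun w hw => h w (by simp [hw])) y hy
      omega

lemma sconcat_ne_nil {L : List (List ℕ)} (hL : L ≠ []) (h : ∀ w ∈ L, w ≠ []) :
    sconcat L ≠ [] := by
  cases L with
  | nil => exact absurd rfl hL
  | cons u t =>
    rw [sconcat]
    simp only [ne_eq, List.append_eq_nil_iff, not_and]
    intro hu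
    exact absurd hu (h u (by simp))

lemma sconcat_append (L1 L2 : List (List ℕ)) :
    sconcat (L1 ++ L2) = sconcat L1 ++ (sconcat L2).map (· + (sconcat L1).length) := by
  induction L1 with
  | nil => simp [sconcat]
  | cons u t ih =>
    have hc : (u :: t) ++ L2 = u :: (t ++ L2) := rfl
    rw [hc, sconcat, ih, List.map_append, List.map_map, sconcat, List.append_assoc,
      List.length_append, List.length_map]
    congr 2
    apply List.map_congr_left
    intro x _
    simp only [Function.comp_apply]
    omega

lemma exists_fact : ∀ n (a : List ℕ), a.length ≤ n → a ≠ [] → IsParkingFunction a →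
    ∃ L : List (List ℕ),
      (∀ w ∈ L, w ≠ [] ∧ Connected w ∧ IsParkingFunction w) ∧ sconcat L = a := by
  intro n
  induction n with
  | zero => intro a ha hne _; simp at ha; exact absurd ha hne
  | succ n ih =>
    intro a ha hne hpf
    by_cases hc : Connected a
    · refine ⟨[a], ?_, ?_⟩
      · intro w hw
        simp only [List.mem_singleton] at hw
        subst hw
        exact ⟨hne, hc, hpf⟩
      · simp [sconcat]
    · rw [Connected, not_not] at hc
      obtain ⟨u, v, hu, hv, hup, hvp, heq⟩ := hc
      obtain ⟨hupf, hvpf⟩ := part_i u v hu hv hup hvp (heq ▸ hpf)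
      have hulen : 1 ≤ u.length := List.length_pos_iff.mpr hu
      have hvlen : 1 ≤ v.length := List.length_pos_iff.mpr hv
      have hlen : a.length = u.length + v.length := by
        rw [heq]; simp
      obtain ⟨Lu, hLu, hLu2⟩ := ih u (by omega) hu hupf
      obtain ⟨Lv, hLv, hLv2⟩ := ih v (by omega) hv hvpf
      refine ⟨Lu ++ Lv, ?_, ?_⟩
      · intro w hw
        rcases List.mem_append.mp hw with h | h
        · exact hLu w h
        · exact hLv w h
      · rw [sconcat_append, hLu2, hLv2, heq]
lemma head_eq (w w' : List ℕ) (t t' : List (List ℕ))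
    (hwne : w ≠ []) (hconn : Connected w') (hwp : ∀ x ∈ w, 1 ≤ x)
    (htp : ∀ s ∈ t, ∀ x ∈ s, 1 ≤ x)
    (hle : w.length ≤ w'.length)
    (heq : w ++ (sconcat t).map (· + w.length) = w' ++ (sconcat t').map (· + w'.length)) :
    w = w' := by
  have hpre : w <+: w' :=
    List.prefix_of_prefix_length_le ⟨_, heq⟩ ⟨_, rfl⟩ hle
  obtain ⟨r, hr⟩ := hpre
  rcases eq_or_ne r [] with rfl | hrne
  · simpa using hr
  exfalso
  set B := (sconcat t').map (· + w'.length) with hB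
  have hA : (sconcat t).map (· + w.length) = r ++ B := by
    apply List.append_cancel_left (as := w)
    rw [heq, ← hr, List.append_assoc]
  have hrsub : ∀ x ∈ r, w.length + 1 ≤ x := by
    intro x hx
    have hx' : x ∈ (sconcat t).map (· + w.length) := by
      rw [hA]; exact List.mem_append_left B hx
    obtain ⟨y, hy, rfl⟩ := List.mem_map.mp hx'
    have := sconcat_pos htp y hy
    omega
  apply hconn
  refine ⟨w, r.map (· - w.length), hwne, by simpa using hrne, hwp, ?_, ?_⟩
  · intro x hx
    obtain ⟨y, hy, rfl⟩ := List.mem_map.mp hx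
    have := hrsub y hy
    omega
  · rw [← hr, List.map_map]
    congr 1
    symm
    have h3 : r.map ((· + w.length) ∘ (· - w.length)) = r.map id :=
      List.map_congr_left (fun x hx => by
        have := hrsub x hx
        simp only [Function.comp_apply, id]
        omega)
    simpa using h3

lemma uniq_fact : ∀ L L' : List (List ℕ),
    (∀ w ∈ L, w ≠ [] ∧ Connected w ∧ (∀ x ∈ w, 1 ≤ x)) →
    (∀ w ∈ L', w ≠ [] ∧ Connected w ∧ (∀ x ∈ w, 1 ≤ x)) →
    sconcat L = sconcat L' → L = L' := by
  intro L
  induction L with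
  | nil =>
    intro L' _ hL' h
    cases L' with
    | nil => rfl
    | cons w' t' =>
      exact absurd h.symm (sconcat_ne_nil (by simp) (fun w hw => (hL' w hw).1))
  | cons w t ih =>
    intro L' hL hL' h
    cases L' with
    | nil =>
      exact absurd h (sconcat_ne_nil (by simp) (fun w hw => (hL w hw).1))
    | cons w' t' =>
      rw [sconcat, sconcat] at h
      have hw := hL w (by simp)
      have hw' := hL' w' (by simp)
      have hww' : w = w' := by
        rcases le_total w.length w'.length with hle | hle
        · exact head_eq w w' t t' hw.1 hw'.2.1 hw.2.2
            (fun s hs => (hL s (by simp [hs])).2.2) hle h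
        · exact (head_eq w' w t' t hw'.1 hw.2.1 hw'.2.2
            (fun s hs => (hL' s (by simp [hs])).2.2) hle h.symm).symm
      subst hww'
      have htails : sconcat t = sconcat t' :=
        List.map_injective_iff.mpr (fun a b hab => by omega)
          (List.append_cancel_left h)
      rw [ih t' (fun s hs => hL s (by simp [hs])) (fun s hs => hL' s (by simp [hs])) htails]

theorem parkingFunction_factorization :
    (∀ u v : List ℕ, u ≠ [] → v ≠ [] → (∀ x ∈ u, 1 ≤ x) → (∀ x ∈ v, 1 ≤ x) →
      IsParkingFunction (u ++ v.map (· + u.length)) →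
      IsParkingFunction u ∧ IsParkingFunction v) ∧
    (∀ a : List ℕ, a ≠ [] → IsParkingFunction a →
      ∃! L : List (List ℕ),
        (∀ w ∈ L, w ≠ [] ∧ Connected w ∧ IsParkingFunction w) ∧ sconcat L = a) := by
  constructor
  · exact part_i
  · intro a hne hpf
    obtain ⟨L, hL1, hL2⟩ := exists_fact a.length a le_rfl hne hpf
    refine ⟨L, ⟨hL1, hL2⟩, ?_⟩
    rintro L' ⟨hL'1, hL'2⟩
    exact uniq_fact L' L
      (fun w hw => ⟨(hL'1 w hw).1, (hL'1 w hw).2.1, (hL'1 w hw).2.2.1⟩)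
      (fun w hw => ⟨(hL1 w hw).1, (hL1 w hw).2.1, (hL1 w hw).2.2.1⟩)
      (hL'2.trans hL2.symm)
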